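/- arXiv:1404.4093 — 3 statements merged into one kernel-verified Lean document; each statement's English description precedes it below -/
import Mathlib

section
/- Continuity of the Kalman gain: if R > 0 and P, Q ≥ 0, then for K(Q) = Q H*(H Q H* + R)^{-1}, one has |K(Q) − K(P)| ≤ |Q−P| |H| |R^{-1}| (1 + min{|P|,|Q|} |H|² |R^{-1}|). -/
open ContinuousLinearMap RealInnerProductSpace

variable {V W : Type*} [NormedAddCommGroup V] [InnerProductSpace ℝ V] [CompleteSpace V]
  [NormedAddCommGroup W] [InnerProductSpace ℝ W] [CompleteSpace W]

/-- The Kalman gain operator `K(Q) = Q H* (H Q H* + R)⁻¹`. -/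
noncomputable def kalmanGain (H : V →L[ℝ] W) (R : W →L[ℝ] W) (Q : V →L[ℝ] V) : W →L[ℝ] V :=
  (Q ∘L ContinuousLinearMap.adjoint H) ∘L
    Ring.inverse (H ∘L Q ∘L ContinuousLinearMap.adjoint H + R)

section Aux

/-- A coercive operator is a unit. -/
lemma aux_coercive_isUnit (T : W →L[ℝ] W) {α : ℝ} (hα : 0 < α)
    (h : ∀ u : W, α * ‖u‖ ^ 2 ≤ ⟪T u, u⟫) : IsUnit T := by
  refine ContinuousLinearMap.isUnit_of_forall_le_norm_inner_map T
    (c := ⟨α, hα.le⟩) (by exact_mod_cast hα) fun x => ?_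
  have h1 : α * ‖x‖ ^ 2 ≤ ⟪T x, x⟫ := h x
  have h2 : ⟪T x, x⟫ ≤ |⟪T x, x⟫| := le_abs_self _
  rw [Real.norm_eq_abs]
  change ‖x‖ ^ 2 * α ≤ |⟪T x, x⟫|
  nlinarith [norm_nonneg x]

/-- Norm bound for the inverse from an antilipschitz bound. -/
lemma aux_inverse_norm_le (T : W →L[ℝ] W) (hT : IsUnit T) {C : ℝ} (hC : 0 ≤ C)
    (h : ∀ u : W, ‖u‖ ≤ C * ‖T u‖) : ‖(Ring.inverse T : W →L[ℝ] W)‖ ≤ C := by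
  refine ContinuousLinearMap.opNorm_le_bound _ hC fun v => ?_
  have h1 : T ((Ring.inverse T : W →L[ℝ] W) v) = v := by
    have := Ring.mul_inverse_cancel T hT
    calc T ((Ring.inverse T : W →L[ℝ] W) v) = (T * Ring.inverse T) v := rfl
      _ = v := by rw [this]; rfl
  calc ‖(Ring.inverse T : W →L[ℝ] W) v‖ ≤ C * ‖T ((Ring.inverse T : W →L[ℝ] W) v)‖ := h _
    _ = C * ‖v‖ := by rw [h1]

/-- Cauchy–Schwarz for a positive operator. -/
lemma aux_cauchy_schwarz (A : W →L[ℝ] W) (hA : A.IsPositive) (x y : W) :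
    ⟪A x, y⟫ ^ 2 ≤ ⟪A x, x⟫ * ⟪A y, y⟫ := by
  have hsym : ∀ a b : W, ⟪A a, b⟫ = ⟪A b, a⟫ := by
    intro a b
    nth_rewrite 1 [← hA.isSelfAdjoint.adjoint_eq]
    rw [ContinuousLinearMap.adjoint_inner_left, real_inner_comm]
  have hq : ∀ t : ℝ, 0 ≤ ⟪A y, y⟫ * (t * t) + (2 * ⟪A x, y⟫) * t + ⟪A x, x⟫ := by
    intro t
    have h0 : 0 ≤ ⟪A (t • y + x), t • y + x⟫ := by
      have := hA.inner_nonneg_left (t • y + x)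
      simpa using this
    have hexp : ⟪A (t • y + x), t • y + x⟫
        = ⟪A y, y⟫ * (t * t) + (2 * ⟪A x, y⟫) * t + ⟪A x, x⟫ := by
      rw [map_add, map_smul]
      simp only [inner_add_left, inner_add_right, real_inner_smul_left, real_inner_smul_right]
      rw [hsym y x]
      ring
    linarith [hexp ▸ h0]
  have := discrim_le_zero hq
  rw [discrim] at this
  nlinarith [this]

/-- Lower coercivity bound in terms of the norm of the inverse. -/
lemma aux_coercive_lower (A : W →L[ℝ] W) (hA : A.IsPositive) (hU : IsUnit A) (u : W) :
    ‖u‖ ^ 2 ≤ ‖(Ring.inverse A : W →L[ℝ] W)‖ * ⟪A u, u⟫ := by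
  set A' : W →L[ℝ] W := Ring.inverse A with hA'
  have hAA' : ∀ w, A (A' w) = w := by
    intro w
    have := Ring.mul_inverse_cancel A hU
    calc A (A' w) = (A * A') w := rfl
      _ = w := by rw [this]; rfl
  have hA'A : ∀ w, A' (A w) = w := by
    intro w
    have := Ring.inverse_mul_cancel A hU
    calc A' (A w) = (A' * A) w := rfl
      _ = w := by rw [this]; rfl
  have hA'pos : A'.IsPositive := by
    constructor
    · refine ContinuousLinearMap.isSelfAdjoint_iff_isSymmetric.mp ?_
      show star A' = A'
      rw [hA', ← Ring.inverse_star, hA.isSelfAdjoint.star_eq]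
    · intro w
      have : A'.reApplyInnerSelf w = ⟪A' w, A (A' w)⟫ := by
        rw [hAA']; rfl
      rw [this]
      rw [real_inner_comm]
      have := hA.inner_nonneg_left (A' w)
      simpa using this
  -- Cauchy–Schwarz with A', points (A u) and u
  have hcs := aux_cauchy_schwarz A' hA'pos (A u) u
  rw [hA'A u] at hcs
  have h1 : ⟪A' u, u⟫ ≤ ‖A'‖ * ‖u‖ ^ 2 := by
    calc ⟪A' u, u⟫ ≤ ‖A' u‖ * ‖u‖ := real_inner_le_norm _ _
      _ ≤ (‖A'‖ * ‖u‖) * ‖u‖ := by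
          have := A'.le_opNorm u
          nlinarith [norm_nonneg u]
      _ = ‖A'‖ * ‖u‖ ^ 2 := by ring
  have h2 : ⟪u, A u⟫ = ⟪A u, u⟫ := real_inner_comm _ _
  rw [h2] at hcs
  have huu : ⟪u, u⟫ = ‖u‖ ^ 2 := real_inner_self_eq_norm_sq u
  rw [huu] at hcs
  have hAuu : 0 ≤ ⟪A u, u⟫ := by
    have := hA.inner_nonneg_left u
    simpa using this
  have hA'norm : 0 ≤ ‖A'‖ := norm_nonneg _
  rcases eq_or_lt_of_le (sq_nonneg ‖u‖) with h0 | h0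
  · nlinarith
  · nlinarith [hcs, h1]

end Aux

section Main

variable (H : V →L[ℝ] W) (R : W →L[ℝ] W)

/-- Invertibility and norm bound for `H Q H* + R`. -/
lemma aux_S_facts (Q : V →L[ℝ] V) (hQ : Q.IsPositive) (hRsym : IsSelfAdjoint R)
    (hRpos : ∃ α : ℝ, 0 < α ∧ ∀ u : W, α * ‖u‖ ^ 2 ≤ ⟪R u, u⟫) :
    IsUnit (H ∘L Q ∘L ContinuousLinearMap.adjoint H + R) ∧
      ‖(Ring.inverse (H ∘L Q ∘L ContinuousLinearMap.adjoint H + R) : W →L[ℝ] W)‖ ≤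
        ‖(Ring.inverse R : W →L[ℝ] W)‖ := by
  obtain ⟨α, hα, hc⟩ := hRpos
  set S : W →L[ℝ] W := H ∘L Q ∘L ContinuousLinearMap.adjoint H + R with hS
  have hHQHpos : (H ∘L Q ∘L ContinuousLinearMap.adjoint H).IsPositive := hQ.conj_adjoint H
  have hRposop : R.IsPositive := by
    refine ⟨ContinuousLinearMap.isSelfAdjoint_iff_isSymmetric.mp hRsym, fun u => ?_⟩
    have := hc u
    have h0 : (0:ℝ) ≤ α * ‖u‖ ^ 2 := by positivity
    simpa [ContinuousLinearMap.reApplyInnerSelf] using le_trans h0 this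
  have hScoer : ∀ u : W, α * ‖u‖ ^ 2 ≤ ⟪S u, u⟫ := by
    intro u
    have h1 : 0 ≤ ⟪(H ∘L Q ∘L ContinuousLinearMap.adjoint H) u, u⟫ := by
      have := hHQHpos.inner_nonneg_left u
      simpa using this
    have h2 : ⟪S u, u⟫ = ⟪(H ∘L Q ∘L ContinuousLinearMap.adjoint H) u, u⟫ + ⟪R u, u⟫ := by
      rw [hS]; simp [inner_add_left]
    rw [h2]
    linarith [hc u]
  have hSunit : IsUnit S := aux_coercive_isUnit S hα hScoer
  have hRunit : IsUnit R := aux_coercive_isUnit R hα hc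
  refine ⟨hSunit, ?_⟩
  have hlow := aux_coercive_lower R hRposop hRunit
  have hRn : 0 ≤ ‖(Ring.inverse R : W →L[ℝ] W)‖ := norm_nonneg _
  refine aux_inverse_norm_le S hSunit hRn fun u => ?_
  have h1 : ‖u‖ ^ 2 ≤ ‖(Ring.inverse R : W →L[ℝ] W)‖ * ⟪S u, u⟫ := by
    have h2 : ⟪R u, u⟫ ≤ ⟪S u, u⟫ := by
      have h3 : ⟪S u, u⟫ = ⟪(H ∘L Q ∘L ContinuousLinearMap.adjoint H) u, u⟫ + ⟪R u, u⟫ := by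
        rw [hS]; simp [inner_add_left]
      have h4 : 0 ≤ ⟪(H ∘L Q ∘L ContinuousLinearMap.adjoint H) u, u⟫ := by
        have := hHQHpos.inner_nonneg_left u
        simpa using this
      linarith
    calc ‖u‖ ^ 2 ≤ ‖(Ring.inverse R : W →L[ℝ] W)‖ * ⟪R u, u⟫ := hlow u
      _ ≤ ‖(Ring.inverse R : W →L[ℝ] W)‖ * ⟪S u, u⟫ := by
          exact mul_le_mul_of_nonneg_left h2 hRn
  have h5 : ⟪S u, u⟫ ≤ ‖S u‖ * ‖u‖ := real_inner_le_norm _ _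
  rcases eq_or_ne u 0 with rfl | hu
  · simp
  · have hupos : 0 < ‖u‖ := norm_pos_iff.mpr hu
    nlinarith [h1, h5, mul_nonneg hRn (norm_nonneg (S u))]

/-- One-sided continuity bound with `‖P‖` on the right. -/
lemma aux_main (P Q : V →L[ℝ] V)
    (hP : P.IsPositive) (hQ : Q.IsPositive) (hRsym : IsSelfAdjoint R)
    (hRpos : ∃ α : ℝ, 0 < α ∧ ∀ u : W, α * ‖u‖ ^ 2 ≤ ⟪R u, u⟫) :
    ‖kalmanGain H R Q - kalmanGain H R P‖
      ≤ ‖Q - P‖ * ‖H‖ * ‖(Ring.inverse R : W →L[ℝ] W)‖ *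
        (1 + ‖P‖ * ‖H‖ ^ 2 * ‖(Ring.inverse R : W →L[ℝ] W)‖) := by
  obtain ⟨hSunit, hSnorm⟩ := aux_S_facts H R Q hQ hRsym hRpos
  obtain ⟨hTunit, hTnorm⟩ := aux_S_facts H R P hP hRsym hRpos
  set H' : W →L[ℝ] V := ContinuousLinearMap.adjoint H with hH'
  set S : W →L[ℝ] W := H ∘L Q ∘L H' + R with hSdef
  set T : W →L[ℝ] W := H ∘L P ∘L H' + R with hTdef
  set S' : W →L[ℝ] W := Ring.inverse S with hS'def
  set T' : W →L[ℝ] W := Ring.inverse T with hT'def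
  have hT'T : T' * T = 1 := Ring.inverse_mul_cancel T hTunit
  have hSS' : S * S' = 1 := Ring.mul_inverse_cancel S hSunit
  -- inverse difference identity
  have hinv : S' - T' = T' ∘L ((T - S) ∘L S') := by
    have : T' ∘L ((T - S) ∘L S') = T' * (T - S) * S' := by
      rw [ContinuousLinearMap.mul_def, ContinuousLinearMap.mul_def]
      rw [ContinuousLinearMap.comp_assoc]
    rw [this, mul_sub, sub_mul, hT'T, one_mul, mul_assoc, hSS', mul_one]
  have hTS : T - S = H ∘L ((P - Q) ∘L H') := by
    rw [hTdef, hSdef]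
    ext v
    simp [ContinuousLinearMap.comp_apply, map_sub]
  -- main identity
  have hid : kalmanGain H R Q - kalmanGain H R P
      = ((Q - P) ∘L H') ∘L S' + (P ∘L H') ∘L (T' ∘L ((H ∘L ((P - Q) ∘L H')) ∘L S')) := by
    have h1 : kalmanGain H R Q = (Q ∘L H') ∘L S' := rfl
    have h2 : kalmanGain H R P = (P ∘L H') ∘L T' := rfl
    rw [h1, h2]
    have h3 : ((Q - P) ∘L H') ∘L S' = (Q ∘L H') ∘L S' - (P ∘L H') ∘L S' := by
      ext v; simp [ContinuousLinearMap.comp_apply, map_sub]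
    have h4 : (P ∘L H') ∘L (T' ∘L ((H ∘L ((P - Q) ∘L H')) ∘L S'))
        = (P ∘L H') ∘L S' - (P ∘L H') ∘L T' := by
      rw [← hTS, ← hinv]
      ext v; simp [ContinuousLinearMap.comp_apply, map_sub]
    rw [h3, h4]
    abel
  rw [hid]
  have hHn : ‖H'‖ = ‖H‖ := by
    rw [hH']
    exact ContinuousLinearMap.adjoint.norm_map H
  set r : ℝ := ‖(Ring.inverse R : W →L[ℝ] W)‖ with hr
  have hrn : 0 ≤ r := norm_nonneg _
  have b1 : ‖((Q - P) ∘L H') ∘L S'‖ ≤ ‖Q - P‖ * ‖H‖ * r := by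
    calc ‖((Q - P) ∘L H') ∘L S'‖ ≤ ‖(Q - P) ∘L H'‖ * ‖S'‖ :=
          ContinuousLinearMap.opNorm_comp_le _ _
      _ ≤ (‖Q - P‖ * ‖H'‖) * ‖S'‖ := by
          gcongr
          exact ContinuousLinearMap.opNorm_comp_le _ _
      _ ≤ (‖Q - P‖ * ‖H‖) * r := by
          rw [hHn]
          gcongr
      _ = ‖Q - P‖ * ‖H‖ * r := rfl
  have b2 : ‖(P ∘L H') ∘L (T' ∘L ((H ∘L ((P - Q) ∘L H')) ∘L S'))‖
      ≤ ‖P‖ * ‖H‖ * (r * (‖H‖ * (‖Q - P‖ * ‖H‖) * r)) := by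
    have c1 : ‖P ∘L H'‖ ≤ ‖P‖ * ‖H‖ := by
      calc ‖P ∘L H'‖ ≤ ‖P‖ * ‖H'‖ := ContinuousLinearMap.opNorm_comp_le _ _
        _ = ‖P‖ * ‖H‖ := by rw [hHn]
    have c2 : ‖(P - Q) ∘L H'‖ ≤ ‖Q - P‖ * ‖H‖ := by
      calc ‖(P - Q) ∘L H'‖ ≤ ‖P - Q‖ * ‖H'‖ := ContinuousLinearMap.opNorm_comp_le _ _
        _ = ‖Q - P‖ * ‖H‖ := by rw [hHn, norm_sub_rev]
    have c3 : ‖H ∘L ((P - Q) ∘L H')‖ ≤ ‖H‖ * (‖Q - P‖ * ‖H‖) := by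
      calc ‖H ∘L ((P - Q) ∘L H')‖ ≤ ‖H‖ * ‖(P - Q) ∘L H'‖ :=
            ContinuousLinearMap.opNorm_comp_le _ _
        _ ≤ ‖H‖ * (‖Q - P‖ * ‖H‖) := by gcongr
    calc ‖(P ∘L H') ∘L (T' ∘L ((H ∘L ((P - Q) ∘L H')) ∘L S'))‖
        ≤ ‖P ∘L H'‖ * ‖T' ∘L ((H ∘L ((P - Q) ∘L H')) ∘L S')‖ :=
          ContinuousLinearMap.opNorm_comp_le _ _
      _ ≤ ‖P ∘L H'‖ * (‖T'‖ * ‖(H ∘L ((P - Q) ∘L H')) ∘L S'‖) := by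
          gcongr
          exact ContinuousLinearMap.opNorm_comp_le _ _
      _ ≤ ‖P ∘L H'‖ * (‖T'‖ * (‖H ∘L ((P - Q) ∘L H')‖ * ‖S'‖)) := by
          gcongr
          exact ContinuousLinearMap.opNorm_comp_le _ _
      _ ≤ (‖P‖ * ‖H‖) * (r * ((‖H‖ * (‖Q - P‖ * ‖H‖)) * r)) := by
          gcongr
      _ = ‖P‖ * ‖H‖ * (r * (‖H‖ * (‖Q - P‖ * ‖H‖) * r)) := by ring
  calc ‖((Q - P) ∘L H') ∘L S' + (P ∘L H') ∘L (T' ∘L ((H ∘L ((P - Q) ∘L H')) ∘L S'))‖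
      ≤ ‖((Q - P) ∘L H') ∘L S'‖ + ‖(P ∘L H') ∘L (T' ∘L ((H ∘L ((P - Q) ∘L H')) ∘L S'))‖ :=
        norm_add_le _ _
    _ ≤ ‖Q - P‖ * ‖H‖ * r + ‖P‖ * ‖H‖ * (r * (‖H‖ * (‖Q - P‖ * ‖H‖) * r)) := by
        exact add_le_add b1 b2
    _ = ‖Q - P‖ * ‖H‖ * r * (1 + ‖P‖ * ‖H‖ ^ 2 * r) := by ring

end Main

/-- Continuity of the Kalman gain: if `R > 0` and `P, Q ≥ 0`, then
`|K(Q) − K(P)| ≤ |Q−P| |H| |R⁻¹| (1 + min{|P|,|Q|} |H|² |R⁻¹|)`. -/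
theorem kalmanGain_continuity
    (H : V →L[ℝ] W) (R : W →L[ℝ] W) (P Q : V →L[ℝ] V)
    (hP : P.IsPositive) (hQ : Q.IsPositive) (hRsym : IsSelfAdjoint R)
    (hRpos : ∃ α : ℝ, 0 < α ∧ ∀ u : W, α * ‖u‖ ^ 2 ≤ ⟪R u, u⟫) :
    ‖kalmanGain H R Q - kalmanGain H R P‖
      ≤ ‖Q - P‖ * ‖H‖ * ‖(Ring.inverse R : W →L[ℝ] W)‖ *
        (1 + min ‖P‖ ‖Q‖ * ‖H‖ ^ 2 * ‖(Ring.inverse R : W →L[ℝ] W)‖) := by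
  rcases min_cases ‖P‖ ‖Q‖ with ⟨hmin, _⟩ | ⟨hmin, _⟩
  · rw [hmin]
    exact aux_main H R P Q hP hQ hRsym hRpos
  · rw [hmin]
    have := aux_main H R Q P hQ hP hRsym hRpos
    rw [norm_sub_rev (kalmanGain H R P), norm_sub_rev P Q] at this
    exact this
end

section
/- Bound on the analysis mean: if R > 0 and Q ≥ 0, then |B(X,Q)| ≤ |X| + |Q| |H| |R^{-1}| |d − H X|, where B(X,Q) = X + K(Q)(d − HX) with K(Q) = Q H*(H Q H* + R)^{-1}. -/
open ContinuousLinearMap RealInnerProductSpace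

variable {V W : Type*} [NormedAddCommGroup V] [InnerProductSpace ℝ V] [CompleteSpace V]
  [NormedAddCommGroup W] [InnerProductSpace ℝ W] [CompleteSpace W]

/-- The analysis mean map `B(X,Q) = X + K(Q)(d − H X)`. -/
noncomputable def analysisMean (H : V →L[ℝ] W) (R : W →L[ℝ] W) (d : W)
    (X : V) (Q : V →L[ℝ] V) : V :=
  X + kalmanGain H R Q (d - H X)

/-- Cauchy–Schwarz for a positive operator. -/
lemma isPositive_cauchy_schwarz (R : W →L[ℝ] W) (hR : R.IsPositive) (x y : W) :
    ⟪R x, y⟫ ^ 2 ≤ ⟪R x, x⟫ * ⟪R y, y⟫ := by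
  have hsym : ∀ a b : W, ⟪R a, b⟫ = ⟪a, R b⟫ := by
    intro a b
    have h := ContinuousLinearMap.adjoint_inner_left R b a
    rwa [hR.isSelfAdjoint.adjoint_eq] at h
  have hnn : ∀ z : W, 0 ≤ ⟪R z, z⟫ := fun z => hR.inner_nonneg_left z
  have h : ∀ t : ℝ, 0 ≤ ⟪R y, y⟫ * (t * t) + (2 * ⟪R x, y⟫) * t + ⟪R x, x⟫ := by
    intro t
    have h0 := hnn (x + t • y)
    have expand : ⟪R (x + t • y), x + t • y⟫
        = ⟪R y, y⟫ * (t * t) + (2 * ⟪R x, y⟫) * t + ⟪R x, x⟫ := by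
      rw [map_add, map_smul]
      simp only [inner_add_left, inner_add_right, inner_smul_left, inner_smul_right,
        ContinuousLinearMap.coe_smul', Pi.smul_apply, smul_eq_mul, RCLike.conj_to_real]
      have : ⟪R y, x⟫ = ⟪R x, y⟫ := by
        rw [hsym y x, real_inner_comm]
      rw [this]; ring
    linarith [expand ▸ h0]
  have := discrim_le_zero h
  rw [discrim] at this
  nlinarith [this]

/-- A coercive operator is a unit and its inverse satisfies the natural bound. -/
lemma coercive_isUnit_and_bound (S : W →L[ℝ] W) {γ : ℝ} (hγ : 0 < γ)
    (hc : ∀ u : W, γ * ‖u‖ ^ 2 ≤ ⟪S u, u⟫) :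
    IsUnit S ∧ ∀ y : W, ‖Ring.inverse S y‖ ≤ γ⁻¹ * ‖y‖ := by
  have hunit : IsUnit S := by
    refine isUnit_of_forall_le_norm_inner_map S (c := ⟨γ, hγ.le⟩) hγ (fun x => ?_)
    calc ‖x‖ ^ 2 * (⟨γ, hγ.le⟩ : NNReal) = γ * ‖x‖ ^ 2 := by
          simp [NNReal.coe_mk]; ring
      _ ≤ ⟪S x, x⟫ := hc x
      _ ≤ ‖(⟪S x, x⟫ : ℝ)‖ := le_abs_self _
  refine ⟨hunit, fun y => ?_⟩
  set u : W := Ring.inverse S y with hu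
  have hSu : S u = y := by
    have h1 : S * Ring.inverse S = 1 := Ring.mul_inverse_cancel S hunit
    calc S u = (S * Ring.inverse S) y := rfl
      _ = y := by rw [h1]; rfl
  have key : γ * ‖u‖ ^ 2 ≤ ‖y‖ * ‖u‖ := by
    calc γ * ‖u‖ ^ 2 ≤ ⟪S u, u⟫ := hc u
      _ = ⟪y, u⟫ := by rw [hSu]
      _ ≤ ‖y‖ * ‖u‖ := real_inner_le_norm y u
  rcases eq_or_lt_of_le (norm_nonneg u) with h0 | h0
  · rw [← h0]
    positivity
  · rw [inv_mul_eq_div, le_div_iff₀ hγ]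
    have : γ * ‖u‖ * ‖u‖ ≤ ‖y‖ * ‖u‖ := by nlinarith
    calc ‖u‖ * γ = γ * ‖u‖ := mul_comm _ _
      _ ≤ ‖y‖ := by
        have := (mul_le_mul_iff_of_pos_right h0).mp this
        linarith

/-- Bound on the analysis mean: if `R > 0` and `Q ≥ 0`, then
`|B(X,Q)| ≤ |X| + |Q| |H| |R⁻¹| |d − H X|`. -/
theorem analysisMean_bound
    (H : V →L[ℝ] W) (R : W →L[ℝ] W) (d : W) (X : V) (Q : V →L[ℝ] V)
    (hQ : Q.IsPositive) (hRsym : IsSelfAdjoint R)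
    (hRpos : ∃ α : ℝ, 0 < α ∧ ∀ u : W, α * ‖u‖ ^ 2 ≤ ⟪R u, u⟫) :
    ‖analysisMean H R d X Q‖
      ≤ ‖X‖ + ‖Q‖ * ‖H‖ * ‖(Ring.inverse R : W →L[ℝ] W)‖ * ‖d - H X‖ := by
  obtain ⟨α, hα, hcoer⟩ := hRpos
  have hRunit : IsUnit R := (coercive_isUnit_and_bound R hα hcoer).1
  have hRinvbd : ∀ y : W, ‖Ring.inverse R y‖ ≤ α⁻¹ * ‖y‖ :=
    (coercive_isUnit_and_bound R hα hcoer).2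
  rcases subsingleton_or_nontrivial W with hsub | hnt
  · have hd : d - H X = 0 := Subsingleton.elim _ _
    have : analysisMean H R d X Q = X := by
      rw [analysisMean, hd, map_zero, add_zero]
    rw [this, hd, norm_zero, mul_zero, add_zero]
  -- nontrivial case
  set β : ℝ := ‖(Ring.inverse R : W →L[ℝ] W)‖ with hβ
  have hβpos : 0 < β := by
    rw [hβ, norm_pos_iff]
    intro h0
    have h1 : Ring.inverse R * R = 1 := Ring.inverse_mul_cancel R hRunit
    rw [h0, zero_mul] at h1
    exact one_ne_zero h1.symm
  have hRposOp : R.IsPositive := by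
    refine ⟨hRsym.isSymmetric, fun x => ?_⟩
    have := hcoer x
    have : (0:ℝ) ≤ ⟪R x, x⟫ := le_trans (by positivity) this
    simpa [ContinuousLinearMap.reApplyInnerSelf] using this
  -- key estimate: ⟪R u, u⟫ ≥ β⁻¹ ‖u‖²
  have hRlow : ∀ u : W, β⁻¹ * ‖u‖ ^ 2 ≤ ⟪R u, u⟫ := by
    intro u
    rcases eq_or_ne u 0 with rfl | hu0
    · simp
    set v : W := Ring.inverse R u with hv
    have hRv : R v = u := by
      have h1 : R * Ring.inverse R = 1 := Ring.mul_inverse_cancel R hRunit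
      calc R v = (R * Ring.inverse R) u := rfl
        _ = u := by rw [h1]; rfl
    have hvbd : ‖v‖ ≤ β * ‖u‖ := (Ring.inverse R : W →L[ℝ] W).le_opNorm u
    have hcs := isPositive_cauchy_schwarz R hRposOp v u
    have h1 : ⟪R v, u⟫ = ‖u‖ ^ 2 := by
      rw [hRv, real_inner_self_eq_norm_sq]
    have h2 : ⟪R v, v⟫ = ⟪u, v⟫ := by rw [hRv]
    have h3 : ⟪u, v⟫ ≤ ‖u‖ * ‖v‖ := real_inner_le_norm u v
    have h4 : (‖u‖ ^ 2) ^ 2 ≤ (‖u‖ * (β * ‖u‖)) * ⟪R u, u⟫ := by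
      have hRuu : (0:ℝ) ≤ ⟪R u, u⟫ := le_trans (by positivity) (hcoer u)
      calc (‖u‖ ^ 2) ^ 2 = ⟪R v, u⟫ ^ 2 := by rw [h1]
        _ ≤ ⟪R v, v⟫ * ⟪R u, u⟫ := hcs
        _ = ⟪u, v⟫ * ⟪R u, u⟫ := by rw [h2]
        _ ≤ (‖u‖ * ‖v‖) * ⟪R u, u⟫ := by nlinarith
        _ ≤ (‖u‖ * (β * ‖u‖)) * ⟪R u, u⟫ := by
            have : ‖u‖ * ‖v‖ ≤ ‖u‖ * (β * ‖u‖) :=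
              mul_le_mul_of_nonneg_left hvbd (norm_nonneg u)
            nlinarith
    have hun : 0 < ‖u‖ := norm_pos_iff.mpr hu0
    have hRuu : (0:ℝ) ≤ ⟪R u, u⟫ := le_trans (by positivity) (hcoer u)
    rw [inv_mul_eq_div, div_le_iff₀ hβpos]
    nlinarith [h4, mul_pos hun hun, sq_nonneg (‖u‖^2 - ⟪R u, u⟫ * β)]
  -- coercivity of S
  set S : W →L[ℝ] W := H ∘L Q ∘L ContinuousLinearMap.adjoint H + R with hS
  have hQH : (H ∘L Q ∘L ContinuousLinearMap.adjoint H).IsPositive := hQ.conj_adjoint H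
  have hScoer : ∀ u : W, β⁻¹ * ‖u‖ ^ 2 ≤ ⟪S u, u⟫ := by
    intro u
    have h1 : (0:ℝ) ≤ ⟪(H ∘L Q ∘L ContinuousLinearMap.adjoint H) u, u⟫ :=
      hQH.inner_nonneg_left u
    have h2 := hRlow u
    have : ⟪S u, u⟫ = ⟪(H ∘L Q ∘L ContinuousLinearMap.adjoint H) u, u⟫ + ⟪R u, u⟫ := by
      rw [hS]
      simp [inner_add_left]
    linarith [this ▸ (by linarith : β⁻¹ * ‖u‖ ^ 2 ≤ ⟪(H ∘L Q ∘L ContinuousLinearMap.adjoint H) u, u⟫ + ⟪R u, u⟫)]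
  have hβinv : (0:ℝ) < β⁻¹ := inv_pos.mpr hβpos
  have hSinvbd : ∀ y : W, ‖Ring.inverse S y‖ ≤ β * ‖y‖ := by
    intro y
    have := (coercive_isUnit_and_bound S hβinv hScoer).2 y
    rwa [inv_inv] at this
  -- final estimate
  have hK : kalmanGain H R Q (d - H X)
      = (Q ∘L ContinuousLinearMap.adjoint H) (Ring.inverse S (d - H X)) := rfl
  have hadj : ‖ContinuousLinearMap.adjoint H‖ = ‖H‖ :=
    LinearIsometryEquiv.norm_map ContinuousLinearMap.adjoint H
  calc ‖analysisMean H R d X Q‖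
      ≤ ‖X‖ + ‖kalmanGain H R Q (d - H X)‖ := norm_add_le _ _
    _ ≤ ‖X‖ + ‖Q‖ * ‖H‖ * β * ‖d - H X‖ := by
        have hb : ‖kalmanGain H R Q (d - H X)‖ ≤ ‖Q‖ * ‖H‖ * (β * ‖d - H X‖) := by
          rw [hK]
          calc ‖(Q ∘L ContinuousLinearMap.adjoint H) (Ring.inverse S (d - H X))‖
              ≤ ‖Q ∘L ContinuousLinearMap.adjoint H‖ * ‖Ring.inverse S (d - H X)‖ :=
                ContinuousLinearMap.le_opNorm _ _
            _ ≤ (‖Q‖ * ‖H‖) * (β * ‖d - H X‖) := by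
                refine mul_le_mul ?_ (hSinvbd _) (norm_nonneg _) (by positivity)
                calc ‖Q ∘L ContinuousLinearMap.adjoint H‖
                    ≤ ‖Q‖ * ‖ContinuousLinearMap.adjoint H‖ :=
                      ContinuousLinearMap.opNorm_comp_le _ _
                  _ = ‖Q‖ * ‖H‖ := by rw [hadj]
            _ = ‖Q‖ * ‖H‖ * (β * ‖d - H X‖) := rfl
        linarith [hb]
end

section
/- Continuity of the analysis mean map: if R > 0, P, Q ≥ 0, and c = |H|²|R^{-1}|, then |B(X,Q) − B(Y,P)| ≤ |X−Y|(1 + c|Q|) + |Q−P| |H| |R^{-1}| (1 + c|P|) |d − H Y|, where B(X,Q) = X + K(Q)(d − HX). -/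
open ContinuousLinearMap RealInnerProductSpace

variable {V W : Type*} [NormedAddCommGroup V] [InnerProductSpace ℝ V] [CompleteSpace V]
  [NormedAddCommGroup W] [InnerProductSpace ℝ W] [CompleteSpace W]

section Aux

variable {E : Type*} [NormedAddCommGroup E] [InnerProductSpace ℝ E] [CompleteSpace E]

/-- A coercive operator is a unit. -/
lemma aux_isUnit {T : E →L[ℝ] E} {α : ℝ} (hα : 0 < α)
    (h : ∀ u : E, α * ‖u‖ ^ 2 ≤ ⟪T u, u⟫) : IsUnit T := by
  refine isUnit_of_forall_le_norm_inner_map T (c := α.toNNReal)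
    (by simpa using hα) fun x => ?_
  have h1 := h x
  have h2 : α * ‖x‖ ^ 2 ≤ ‖⟪T x, x⟫‖ := h1.trans (le_abs_self _)
  calc ‖x‖ ^ 2 * (α.toNNReal : ℝ) = α * ‖x‖ ^ 2 := by
        rw [Real.coe_toNNReal α hα.le]; ring
    _ ≤ ‖⟪T x, x⟫‖ := h2

/-- Norm bound for a self-adjoint operator from a bound on its quadratic form. -/
lemma aux_norm_le {A : E →L[ℝ] E} (hA : IsSelfAdjoint A) {c : ℝ} (hc : 0 ≤ c)
    (h : ∀ x : E, |⟪A x, x⟫| ≤ c * ‖x‖ ^ 2) : ‖A‖ ≤ c := by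
  have hsym : ∀ p q : E, ⟪A p, q⟫ = ⟪p, A q⟫ := fun p q => by
    conv_lhs => rw [← ContinuousLinearMap.isSelfAdjoint_iff'.mp hA]
    exact ContinuousLinearMap.adjoint_inner_left A q p
  refine A.opNorm_le_bound hc fun x => ?_
  rcases eq_or_ne (A x) 0 with h0 | h0
  · simp only [h0, norm_zero]
    positivity
  have hx : x ≠ 0 := fun hx => h0 (by simp [hx])
  have hxpos : 0 < ‖x‖ := norm_pos_iff.mpr hx
  have hAxpos : 0 < ‖A x‖ := norm_pos_iff.mpr h0
  set y := (‖x‖ / ‖A x‖) • A x with hy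
  have hyn : ‖y‖ = ‖x‖ := by
    rw [hy, norm_smul, Real.norm_eq_abs, abs_of_nonneg (by positivity),
      div_mul_cancel₀ _ hAxpos.ne']
  have h1 : ⟪A y, x⟫ = ⟪A x, y⟫ := (hsym y x).trans (real_inner_comm y (A x)).symm
  have key : (4:ℝ) * ⟪A x, y⟫ = ⟪A (x+y), x+y⟫ - ⟪A (x-y), x-y⟫ := by
    simp only [map_add, map_sub, inner_add_left, inner_add_right, inner_sub_left,
      inner_sub_right]
    linarith [h1]
  have h2 : ⟪A x, y⟫ = ‖x‖ * ‖A x‖ := by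
    rw [hy, real_inner_smul_right, real_inner_self_eq_norm_sq]
    field_simp
  have hpar : ‖x + y‖ ^ 2 + ‖x - y‖ ^ 2 = 2 * (‖x‖ ^ 2 + ‖y‖ ^ 2) := by
    have := parallelogram_law_with_norm ℝ x y
    nlinarith [this]
  have h3 : (4:ℝ) * (‖x‖ * ‖A x‖) ≤ c * (4 * ‖x‖ ^ 2) := by
    rw [← h2, key]
    calc ⟪A (x+y), x+y⟫ - ⟪A (x-y), x-y⟫
        ≤ |⟪A (x+y), x+y⟫| + |⟪A (x-y), x-y⟫| := by
          have := abs_sub_abs_le_abs_sub (⟪A (x+y), x+y⟫) (⟪A (x-y), x-y⟫)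
          have l1 := le_abs_self (⟪A (x+y), x+y⟫)
          have l2 := neg_abs_le (⟪A (x-y), x-y⟫)
          linarith
      _ ≤ c * ‖x+y‖ ^ 2 + c * ‖x-y‖ ^ 2 := add_le_add (h _) (h _)
      _ = c * (‖x+y‖ ^ 2 + ‖x-y‖ ^ 2) := by ring
      _ = c * (2 * (‖x‖ ^ 2 + ‖y‖ ^ 2)) := by rw [hpar]
      _ = c * (4 * ‖x‖ ^ 2) := by rw [hyn]; ring
  nlinarith [h3, hxpos, hAxpos]

/-- Cauchy–Schwarz for the semi-inner-product induced by a positive symmetric operator. -/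
lemma aux_cs {A : E →L[ℝ] E} (hA : IsSelfAdjoint A) (hpos : ∀ x : E, 0 ≤ ⟪A x, x⟫)
    (u v : E) : ⟪A u, v⟫ ^ 2 ≤ ⟪A u, u⟫ * ⟪A v, v⟫ := by
  have hsym : ∀ p q : E, ⟪A p, q⟫ = ⟪p, A q⟫ := fun p q => by
    conv_lhs => rw [← ContinuousLinearMap.isSelfAdjoint_iff'.mp hA]
    exact ContinuousLinearMap.adjoint_inner_left A q p
  have h1 : ⟪A v, u⟫ = ⟪A u, v⟫ := (hsym v u).trans (real_inner_comm v (A u)).symm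
  have hq : ∀ t : ℝ, 0 ≤ ⟪A v, v⟫ * (t * t) + (2 * ⟪A u, v⟫) * t + ⟪A u, u⟫ := by
    intro t
    have := hpos (u + t • v)
    simp only [map_add, map_smul, inner_add_left, inner_add_right, real_inner_smul_left,
      real_inner_smul_right] at this
    rw [h1] at this
    nlinarith [this]
  have hd := discrim_le_zero hq
  rw [discrim] at hd
  nlinarith [hd]

/-- The inverse of a coercive self-adjoint operator: self-adjointness of the inverse. -/
lemma aux_inv_selfAdjoint {T : E →L[ℝ] E} (hT : IsSelfAdjoint T) :
    IsSelfAdjoint (Ring.inverse T) := by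
  rw [IsSelfAdjoint, ← Ring.inverse_star, hT.star_eq]

lemma aux_inv_pos {T : E →L[ℝ] E} {α : ℝ} (hα : 0 < α)
    (h : ∀ u : E, α * ‖u‖ ^ 2 ≤ ⟪T u, u⟫) (x : E) : 0 ≤ ⟪Ring.inverse T x, x⟫ := by
  have hu : IsUnit T := aux_isUnit hα h
  set u := Ring.inverse T x with hu'
  have hTT : T u = x := by
    calc T u = (T * Ring.inverse T) x := by rw [ContinuousLinearMap.mul_apply]
      _ = x := by rw [Ring.mul_inverse_cancel T hu, ContinuousLinearMap.one_apply]
  calc (0:ℝ) ≤ α * ‖u‖ ^ 2 := by positivity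
    _ ≤ ⟪T u, u⟫ := h u
    _ = ⟪u, x⟫ := by rw [← hTT, real_inner_comm]

lemma aux_apply_inverse {T : E →L[ℝ] E} (hu : IsUnit T) (x : E) :
    T (Ring.inverse T x) = x := by
  calc T (Ring.inverse T x) = (T * Ring.inverse T) x := by rw [ContinuousLinearMap.mul_apply]
    _ = x := by rw [Ring.mul_inverse_cancel T hu, ContinuousLinearMap.one_apply]

lemma aux_inverse_apply {T : E →L[ℝ] E} (hu : IsUnit T) (x : E) :
    Ring.inverse T (T x) = x := by
  calc Ring.inverse T (T x) = (Ring.inverse T * T) x := by rw [ContinuousLinearMap.mul_apply]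
    _ = x := by rw [Ring.inverse_mul_cancel T hu, ContinuousLinearMap.one_apply]

/-- Comparison of norms of inverses: if `0 < R ≤ S`, then `‖S⁻¹‖ ≤ ‖R⁻¹‖`. -/
lemma aux_inv_norm_le {R S : E →L[ℝ] E} {α β : ℝ}
    (hR : IsSelfAdjoint R) (hS : IsSelfAdjoint S)
    (hα : 0 < α) (hcR : ∀ u : E, α * ‖u‖ ^ 2 ≤ ⟪R u, u⟫)
    (hβ : 0 < β) (hcS : ∀ u : E, β * ‖u‖ ^ 2 ≤ ⟪S u, u⟫)
    (hle : ∀ u : E, ⟪R u, u⟫ ≤ ⟪S u, u⟫) :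
    ‖(Ring.inverse S : E →L[ℝ] E)‖ ≤ ‖(Ring.inverse R : E →L[ℝ] E)‖ := by
  have huR : IsUnit R := aux_isUnit hα hcR
  have huS : IsUnit S := aux_isUnit hβ hcS
  have hRpos : ∀ x : E, 0 ≤ ⟪R x, x⟫ := fun x => le_trans (by positivity) (hcR x)
  -- the quadratic form of S⁻¹ is dominated by that of R⁻¹
  have hquad : ∀ x : E, ⟪Ring.inverse S x, x⟫ ≤ ⟪Ring.inverse R x, x⟫ := by
    intro x
    set u := Ring.inverse S x with hu'
    set v := Ring.inverse R x with hv'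
    have hSu : S u = x := aux_apply_inverse huS x
    have hRv : R v = x := aux_apply_inverse huR x
    set t := ⟪u, x⟫ with ht'
    set s := ⟪v, x⟫ with hs'
    have ht0 : 0 ≤ t := aux_inv_pos hβ hcS x
    have hs0 : 0 ≤ s := aux_inv_pos hα hcR x
    have hcs : ⟪R u, v⟫ ^ 2 ≤ ⟪R u, u⟫ * ⟪R v, v⟫ := aux_cs hR hRpos u v
    have e1 : ⟪R u, v⟫ = t := by
      have hsym : ∀ p q : E, ⟪R p, q⟫ = ⟪p, R q⟫ := fun p q => by
        conv_lhs => rw [← ContinuousLinearMap.isSelfAdjoint_iff'.mp hR]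
        exact ContinuousLinearMap.adjoint_inner_left R q p
      rw [hsym u v, hRv]
    have e2 : ⟪R u, u⟫ ≤ t := by
      have := hle u
      have e : ⟪S u, u⟫ = t := by rw [hSu, real_inner_comm]
      linarith [this, e.le]
    have e3 : ⟪R v, v⟫ = s := by rw [hRv, real_inner_comm]
    have hRuu : 0 ≤ ⟪R u, u⟫ := hRpos u
    rw [e1, e3] at hcs
    -- t^2 ≤ ⟪R u,u⟫ * s ≤ t * s, hence t ≤ s
    have key : t ^ 2 ≤ t * s := le_trans hcs (mul_le_mul_of_nonneg_right e2 hs0)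
    rcases eq_or_lt_of_le ht0 with h0 | h0
    · rw [← h0]; exact hs0
    · nlinarith [key, h0]
  have hSinv_sa : IsSelfAdjoint (Ring.inverse S : E →L[ℝ] E) := aux_inv_selfAdjoint hS
  refine aux_norm_le hSinv_sa (norm_nonneg _) fun x => ?_
  have h1 : 0 ≤ ⟪Ring.inverse S x, x⟫ := aux_inv_pos hβ hcS x
  rw [abs_of_nonneg h1]
  calc ⟪Ring.inverse S x, x⟫ ≤ ⟪Ring.inverse R x, x⟫ := hquad x
    _ ≤ ‖Ring.inverse R x‖ * ‖x‖ := real_inner_le_norm _ _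
    _ ≤ ‖(Ring.inverse R : E →L[ℝ] E)‖ * ‖x‖ * ‖x‖ :=
        mul_le_mul_of_nonneg_right ((Ring.inverse R).le_opNorm x) (norm_nonneg x)
    _ = ‖(Ring.inverse R : E →L[ℝ] E)‖ * ‖x‖ ^ 2 := by ring

end Aux

/-- Continuity of the analysis mean map. -/
theorem analysisMean_continuity
    (H : V →L[ℝ] W) (R : W →L[ℝ] W) (d : W) (X Y : V) (P Q : V →L[ℝ] V)
    (hP : P.IsPositive) (hQ : Q.IsPositive) (hRsym : IsSelfAdjoint R)
    (hRpos : ∃ α : ℝ, 0 < α ∧ ∀ u : W, α * ‖u‖ ^ 2 ≤ ⟪R u, u⟫) :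
    ‖analysisMean H R d X Q - analysisMean H R d Y P‖
      ≤ ‖X - Y‖ * (1 + (‖H‖ ^ 2 * ‖(Ring.inverse R : W →L[ℝ] W)‖) * ‖Q‖)
        + ‖Q - P‖ * ‖H‖ * ‖(Ring.inverse R : W →L[ℝ] W)‖ *
          (1 + (‖H‖ ^ 2 * ‖(Ring.inverse R : W →L[ℝ] W)‖) * ‖P‖) * ‖d - H Y‖ := by
  obtain ⟨α, hα, hRc⟩ := hRpos
  set H' := ContinuousLinearMap.adjoint H with hH'
  have hH'n : ‖H'‖ = ‖H‖ := LinearIsometryEquiv.norm_map ContinuousLinearMap.adjoint H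
  set SQ := H ∘L Q ∘L ContinuousLinearMap.adjoint H + R with hSQ
  set SP := H ∘L P ∘L ContinuousLinearMap.adjoint H + R with hSP
  set r := ‖(Ring.inverse R : W →L[ℝ] W)‖ with hr
  have hr0 : 0 ≤ r := norm_nonneg _
  -- quadratic form facts
  have hQquad : ∀ x : W, 0 ≤ ⟪(H ∘L Q ∘L ContinuousLinearMap.adjoint H) x, x⟫ := by
    intro x
    have := (hQ.conj_adjoint H).inner_nonneg_left x
    simpa using this
  have hPquad : ∀ x : W, 0 ≤ ⟪(H ∘L P ∘L ContinuousLinearMap.adjoint H) x, x⟫ := by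
    intro x
    have := (hP.conj_adjoint H).inner_nonneg_left x
    simpa using this
  have hSQquad : ∀ u : W, ⟪SQ u, u⟫
      = ⟪(H ∘L Q ∘L ContinuousLinearMap.adjoint H) u, u⟫ + ⟪R u, u⟫ := by
    intro u
    rw [hSQ, ContinuousLinearMap.add_apply, inner_add_left]
  have hSPquad : ∀ u : W, ⟪SP u, u⟫
      = ⟪(H ∘L P ∘L ContinuousLinearMap.adjoint H) u, u⟫ + ⟪R u, u⟫ := by
    intro u
    rw [hSP, ContinuousLinearMap.add_apply, inner_add_left]
  have hSQc : ∀ u : W, α * ‖u‖ ^ 2 ≤ ⟪SQ u, u⟫ := by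
    intro u; rw [hSQquad u]; linarith [hRc u, hQquad u]
  have hSPc : ∀ u : W, α * ‖u‖ ^ 2 ≤ ⟪SP u, u⟫ := by
    intro u; rw [hSPquad u]; linarith [hRc u, hPquad u]
  have hleQ : ∀ u : W, ⟪R u, u⟫ ≤ ⟪SQ u, u⟫ := by
    intro u; rw [hSQquad u]; linarith [hQquad u]
  have hleP : ∀ u : W, ⟪R u, u⟫ ≤ ⟪SP u, u⟫ := by
    intro u; rw [hSPquad u]; linarith [hPquad u]
  have hSQsym : IsSelfAdjoint SQ := ((hQ.conj_adjoint H).isSelfAdjoint).add hRsym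
  have hSPsym : IsSelfAdjoint SP := ((hP.conj_adjoint H).isSelfAdjoint).add hRsym
  have huSQ : IsUnit SQ := aux_isUnit hα hSQc
  have huSP : IsUnit SP := aux_isUnit hα hSPc
  have hSQinv : ‖(Ring.inverse SQ : W →L[ℝ] W)‖ ≤ r :=
    aux_inv_norm_le hRsym hSQsym hα hRc hα hSQc hleQ
  have hSPinv : ‖(Ring.inverse SP : W →L[ℝ] W)‖ ≤ r :=
    aux_inv_norm_le hRsym hSPsym hα hRc hα hSPc hleP
  -- abbreviations
  set a := Ring.inverse SQ (d - H Y) with ha'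
  set b := Ring.inverse SP (d - H Y) with hb'
  have KQw : kalmanGain H R Q (d - H Y) = Q (H' a) := rfl
  have KPw : kalmanGain H R P (d - H Y) = P (H' b) := rfl
  have hSQa : SQ a = d - H Y := aux_apply_inverse huSQ _
  have hz : H ((P - Q) (H' a)) = SP a - SQ a := by
    rw [hSP, hSQ]
    simp only [ContinuousLinearMap.add_apply, ContinuousLinearMap.comp_apply,
      ContinuousLinearMap.sub_apply, map_sub, hH']
    abel
  have hb2 : b = a - Ring.inverse SP (H ((P - Q) (H' a))) := by
    rw [hz, map_sub, aux_inverse_apply huSP a, hSQa, hb']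
    abel
  have hdiff : kalmanGain H R Q (d - H Y) - kalmanGain H R P (d - H Y)
      = (Q - P) (H' a) + P (H' (Ring.inverse SP (H ((P - Q) (H' a))))) := by
    rw [KQw, KPw, hb2]
    simp only [map_sub, ContinuousLinearMap.sub_apply]
    abel
  -- norm bounds
  have hawn : ‖a‖ ≤ r * ‖d - H Y‖ :=
    ((Ring.inverse SQ).le_opNorm _).trans
      (mul_le_mul_of_nonneg_right hSQinv (norm_nonneg _))
  have n1 : ‖H' a‖ ≤ ‖H‖ * (r * ‖d - H Y‖) := by
    calc ‖H' a‖ ≤ ‖H'‖ * ‖a‖ := H'.le_opNorm a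
      _ ≤ ‖H‖ * (r * ‖d - H Y‖) := by
          rw [hH'n]; exact mul_le_mul_of_nonneg_left hawn (norm_nonneg H)
  have n2 : ‖(Q - P) (H' a)‖ ≤ ‖Q - P‖ * (‖H‖ * (r * ‖d - H Y‖)) :=
    ((Q - P).le_opNorm _).trans (mul_le_mul_of_nonneg_left n1 (norm_nonneg _))
  have n3 : ‖(P - Q) (H' a)‖ ≤ ‖Q - P‖ * (‖H‖ * (r * ‖d - H Y‖)) :=
    ((P - Q).le_opNorm _).trans (by
      rw [norm_sub_rev]
      exact mul_le_mul_of_nonneg_left n1 (norm_nonneg _))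
  have n4 : ‖H ((P - Q) (H' a))‖ ≤ ‖H‖ * (‖Q - P‖ * (‖H‖ * (r * ‖d - H Y‖))) :=
    (H.le_opNorm _).trans (mul_le_mul_of_nonneg_left n3 (norm_nonneg _))
  have n5 : ‖Ring.inverse SP (H ((P - Q) (H' a)))‖
      ≤ r * (‖H‖ * (‖Q - P‖ * (‖H‖ * (r * ‖d - H Y‖)))) :=
    ((Ring.inverse SP).le_opNorm _).trans
      (mul_le_mul hSPinv n4 (norm_nonneg _) hr0)
  have n6 : ‖H' (Ring.inverse SP (H ((P - Q) (H' a))))‖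
      ≤ ‖H‖ * (r * (‖H‖ * (‖Q - P‖ * (‖H‖ * (r * ‖d - H Y‖))))) := by
    calc ‖H' (Ring.inverse SP (H ((P - Q) (H' a))))‖
        ≤ ‖H'‖ * ‖Ring.inverse SP (H ((P - Q) (H' a)))‖ := H'.le_opNorm _
      _ ≤ ‖H‖ * (r * (‖H‖ * (‖Q - P‖ * (‖H‖ * (r * ‖d - H Y‖))))) := by
          rw [hH'n]; exact mul_le_mul_of_nonneg_left n5 (norm_nonneg H)
  have n7 : ‖P (H' (Ring.inverse SP (H ((P - Q) (H' a)))))‖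
      ≤ ‖P‖ * (‖H‖ * (r * (‖H‖ * (‖Q - P‖ * (‖H‖ * (r * ‖d - H Y‖)))))) :=
    (P.le_opNorm _).trans (mul_le_mul_of_nonneg_left n6 (norm_nonneg _))
  have T2 : ‖kalmanGain H R Q (d - H Y) - kalmanGain H R P (d - H Y)‖
      ≤ ‖Q - P‖ * (‖H‖ * (r * ‖d - H Y‖))
        + ‖P‖ * (‖H‖ * (r * (‖H‖ * (‖Q - P‖ * (‖H‖ * (r * ‖d - H Y‖)))))) := by
    rw [hdiff]
    exact (norm_add_le _ _).trans (add_le_add n2 n7)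
  -- bound on the Kalman gain itself
  have hKQ : ‖kalmanGain H R Q‖ ≤ ‖Q‖ * ‖H‖ * r := by
    calc ‖kalmanGain H R Q‖ ≤ ‖Q ∘L H'‖ * ‖(Ring.inverse SQ : W →L[ℝ] W)‖ :=
          ContinuousLinearMap.opNorm_comp_le _ _
      _ ≤ ‖Q‖ * ‖H'‖ * r :=
          mul_le_mul (ContinuousLinearMap.opNorm_comp_le _ _) hSQinv (norm_nonneg _)
            (by positivity)
      _ = ‖Q‖ * ‖H‖ * r := by rw [hH'n]
  have T1 : ‖kalmanGain H R Q (H (X - Y))‖ ≤ ‖Q‖ * ‖H‖ * r * (‖H‖ * ‖X - Y‖) :=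
    ((kalmanGain H R Q).le_opNorm _).trans
      (mul_le_mul hKQ (H.le_opNorm _) (norm_nonneg _) (by positivity))
  -- decomposition of the difference of analysis means
  have E1 : analysisMean H R d X Q - analysisMean H R d Y P
      = (X - Y) - kalmanGain H R Q (H (X - Y))
        + (kalmanGain H R Q (d - H Y) - kalmanGain H R P (d - H Y)) := by
    have hd' : d - H X = (d - H Y) - (H X - H Y) := by abel
    rw [analysisMean, analysisMean, hd', map_sub (kalmanGain H R Q), map_sub H]
    abel
  calc ‖analysisMean H R d X Q - analysisMean H R d Y P‖
      ≤ ‖X - Y‖ + ‖kalmanGain H R Q (H (X - Y))‖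
        + ‖kalmanGain H R Q (d - H Y) - kalmanGain H R P (d - H Y)‖ := by
        rw [E1]
        exact (norm_add_le _ _).trans (add_le_add (norm_sub_le _ _) le_rfl)
    _ ≤ ‖X - Y‖ + ‖Q‖ * ‖H‖ * r * (‖H‖ * ‖X - Y‖)
        + (‖Q - P‖ * (‖H‖ * (r * ‖d - H Y‖))
          + ‖P‖ * (‖H‖ * (r * (‖H‖ * (‖Q - P‖ * (‖H‖ * (r * ‖d - H Y‖))))))) := by
        exact add_le_add (add_le_add le_rfl T1) T2
    _ = ‖X - Y‖ * (1 + (‖H‖ ^ 2 * r) * ‖Q‖)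
        + ‖Q - P‖ * ‖H‖ * r * (1 + (‖H‖ ^ 2 * r) * ‖P‖) * ‖d - H Y‖ := by ring
end
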